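/- Define d(y,z,v) := min_{x∈X} F(x,y,z,v). Then d(·,z,v) is continuously differentiable with ∇_y d(y,z,v) = ∇_y F(x(y,z,v),y,z,v), and ∇_y d(·,z,v) is Lipschitz with constant L_d = L_y·σ₁ + L_y + r₂, where σ₁ = (L_y + r₁ − L_x)/(r₁ − L_x). -/

import Mathlib

open scoped RealInnerProductSpace
open Set

section myAux

variable {F : Type*} [NormedAddCommGroup F] [InnerProductSpace ℝ F] [CompleteSpace F]

lemma my_grad_add {f g : F → ℝ} {a b x : F} (hf : HasGradientAt f a x)
    (hg : HasGradientAt g b x) : HasGradientAt (fun t => f t + g t) (a + b) x := by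
  rw [hasGradientAt_iff_hasFDerivAt] at *
  rw [map_add]; exact hf.add hg

omit [InnerProductSpace ℝ F] [CompleteSpace F] in
lemma my_sq_bound_littleO {K : ℝ} {x : F} {err : F → ℝ} (hK : 0 ≤ K)
    (h : ∀ t, |err t| ≤ K * ‖t - x‖ ^ 2) :
    (fun t : F => err t) =o[nhds x] fun t => t - x := by
  rw [Asymptotics.isLittleO_iff]
  intro c hc
  filter_upwards [Metric.ball_mem_nhds x (show (0:ℝ) < c / (K + 1) by positivity)] with t ht
  have hker : ‖t - x‖ < c / (K + 1) := by rwa [Metric.mem_ball, dist_eq_norm] at ht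
  have h0 : (0:ℝ) ≤ ‖t - x‖ := norm_nonneg _
  have hc2 : K * ‖t - x‖ ≤ c := by
    calc K * ‖t - x‖ ≤ (K + 1) * ‖t - x‖ := by nlinarith
    _ ≤ (K + 1) * (c / (K + 1)) := by
        apply mul_le_mul_of_nonneg_left (le_of_lt hker); positivity
    _ = c := by field_simp
  calc ‖err t‖ ≤ K * ‖t - x‖ ^ 2 := by rw [Real.norm_eq_abs]; exact h t
    _ = K * ‖t - x‖ * ‖t - x‖ := by ring
    _ ≤ c * ‖t - x‖ := by nlinarith

lemma my_grad_quad (r : ℝ) (z x : F) :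
    HasGradientAt (fun t => r / 2 * ‖t - z‖ ^ 2) (r • (x - z)) x := by
  rw [hasGradientAt_iff_isLittleO]
  have key : ∀ t : F, r / 2 * ‖t - z‖ ^ 2 - r / 2 * ‖x - z‖ ^ 2 - ⟪r • (x - z), t - x⟫
      = r / 2 * ‖t - x‖ ^ 2 := by
    intro t
    have h2 : t - x = (t - z) - (x - z) := by abel
    rw [real_inner_smul_left, ← real_inner_self_eq_norm_sq (t - z),
      ← real_inner_self_eq_norm_sq (x - z), ← real_inner_self_eq_norm_sq (t - x), h2]
    simp only [inner_sub_left, inner_sub_right]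
    rw [real_inner_comm x t, real_inner_comm z t, real_inner_comm z x]
    ring
  apply my_sq_bound_littleO (K := |r / 2|) (abs_nonneg _)
  intro t
  rw [key t, abs_mul, abs_of_nonneg (by positivity : (0:ℝ) ≤ ‖t - x‖^2)]

lemma my_line_deriv {h : F → ℝ} {gh : F} {a u : F} {t : ℝ}
    (hh : HasGradientAt h gh (a + t • u)) :
    HasDerivAt (fun s : ℝ => h (a + s • u)) ⟪gh, u⟫ t := by
  have hline : HasDerivAt (fun s : ℝ => a + s • u) u t := by
    simpa using ((hasDerivAt_id t).smul_const u).const_add a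
  have := hh.hasFDerivAt.comp_hasDerivAt t hline
  rw [InnerProductSpace.toDual_apply_apply] at this; exact this

/-- variational inequality at a constrained minimum -/
lemma my_var_ineq {φ : F → ℝ} {G : F → F} {X : Set F} (hXconv : Convex ℝ X)
    (hG : ∀ w, HasGradientAt φ (G w) w) {a b : F} (ha : a ∈ X) (hb : b ∈ X)
    (hmin : IsMinOn φ X a) : 0 ≤ ⟪G a, b - a⟫ := by
  have hloc : IsLocalMinOn φ X a := hmin.localize
  have hfd : HasFDerivWithinAt φ (InnerProductSpace.toDual ℝ F (G a)) X a :=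
    ((hG a).hasFDerivAt).hasFDerivWithinAt
  have hcone : b - a ∈ posTangentConeAt X a :=
    sub_mem_posTangentConeAt_of_segment_subset (hXconv.segment_subset ha hb)
  have := hloc.hasFDerivWithinAt_nonneg hfd hcone
  simpa [InnerProductSpace.toDual_apply_apply] using this

/-- descent-type quadratic bound from a Lipschitz gradient -/
lemma my_descent {g : F → ℝ} {G : F → F} {C : ℝ}
    (hg : ∀ w, HasGradientAt g (G w) w)
    (hLip : ∀ w w', ‖G w - G w'‖ ≤ C * ‖w - w'‖) (y y' : F) :
    |g y' - g y - ⟪G y, y' - y⟫| ≤ C * ‖y' - y‖ ^ 2 := by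
  have hC : 0 ≤ C * ‖y' - y‖ := by
    rcases eq_or_ne y' y with h | h
    · simp [h]
    · have h1 : 0 < ‖y' - y‖ := by
        simpa [sub_ne_zero.mpr h] using norm_pos_iff.mpr (sub_ne_zero.mpr h)
      nlinarith [hLip y' y, norm_nonneg (G y' - G y)]
  set s : Set F := Metric.closedBall y ‖y' - y‖ with hs
  have hys : y ∈ s := Metric.mem_closedBall_self (norm_nonneg _)
  have hy's : y' ∈ s := by
    simp [hs, Metric.mem_closedBall, dist_eq_norm]
  have key := Convex.norm_image_sub_le_of_norm_hasFDerivWithin_le'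
    (f := g) (f' := fun w => InnerProductSpace.toDual ℝ F (G w))
    (φ := InnerProductSpace.toDual ℝ F (G y)) (C := C * ‖y' - y‖)
    (fun w _ => (hg w).hasFDerivAt.hasFDerivWithinAt)
    (fun w hw => by
      rw [← map_sub]
      rw [LinearIsometryEquiv.norm_map]
      calc ‖G w - G y‖ ≤ C * ‖w - y‖ := hLip w y
        _ ≤ C * ‖y' - y‖ := by
            rcases le_or_gt 0 C with hC0 | hC0
            · apply mul_le_mul_of_nonneg_left _ hC0
              simpa [dist_eq_norm] using hw
            · nlinarith [norm_nonneg (w - y), norm_nonneg (G w - G y), hLip w y,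
                (by simpa [dist_eq_norm] using hw : ‖w - y‖ ≤ ‖y' - y‖)])
    (convex_closedBall _ _) hys hy's
  rw [InnerProductSpace.toDual_apply_apply] at key
  calc |g y' - g y - ⟪G y, y' - y⟫| = ‖g y' - g y - ⟪G y, y' - y⟫‖ := rfl
    _ ≤ C * ‖y' - y‖ * ‖y' - y‖ := key
    _ = C * ‖y' - y‖ ^ 2 := by ring

end myAux

/-- symmetry of the mixed second derivative bounds: the Lipschitz constant of `gy` in `x`
also bounds the variation of `gx` in `y`. -/
lemma my_cross {E D : Type*} [NormedAddCommGroup E] [InnerProductSpace ℝ E] [CompleteSpace E]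
    [NormedAddCommGroup D] [InnerProductSpace ℝ D] [CompleteSpace D]
    (f : E → D → ℝ) (gx : E → D → E) (gy : E → D → D) (Lx Ly : ℝ)
    (hLx : 0 ≤ Lx) (hLy : 0 ≤ Ly)
    (hgradx : ∀ x y, HasGradientAt (fun x' => f x' y) (gx x y) x)
    (hgrady : ∀ x y, HasGradientAt (fun y' => f x y') (gy x y) y)
    (hLipx : ∀ x x' y y', ‖gx x y - gx x' y'‖ ≤ Lx * (‖x - x'‖ + ‖y - y'‖))
    (hLipy : ∀ x x' y y', ‖gy x y - gy x' y'‖ ≤ Ly * (‖x - x'‖ + ‖y - y'‖))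
    (a : E) (y y' : D) : ‖gx a y - gx a y'‖ ≤ Ly * ‖y - y'‖ := by
  set u := gx a y - gx a y' with hu
  rcases eq_or_ne u 0 with h0 | hne
  · rw [h0, norm_zero]; positivity
  have hupos : 0 < ‖u‖ := norm_pos_iff.mpr hne
  have claim : ∀ ε : ℝ, 0 < ε → ‖u‖ ^ 2 ≤ Ly * ‖y - y'‖ * ‖u‖ + 2 * Lx * ‖u‖ ^ 2 * ε := by
    intro ε hε
    set b := a + ε • u with hb
    have hba : ‖b - a‖ = ε * ‖u‖ := by
      rw [hb, add_sub_cancel_left, norm_smul, Real.norm_eq_abs, abs_of_pos hε]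
    -- Step 1: bound Δ via gy
    set Δ : ℝ := (f b y - f a y) - (f b y' - f a y') with hΔ
    have step1 : |Δ| ≤ Ly * (ε * ‖u‖) * ‖y - y'‖ := by
      set ψ : ℝ → ℝ := fun s => f b (y' + s • (y - y')) - f a (y' + s • (y - y')) with hψ
      have hder : ∀ s : ℝ, HasDerivAt ψ
          (⟪gy b (y' + s • (y - y')) - gy a (y' + s • (y - y')), y - y'⟫) s := by
        intro s
        have h1 := my_line_deriv (hgrady b (y' + s • (y - y')))
        have h2 := my_line_deriv (hgrady a (y' + s • (y - y')))
        have := h1.sub h2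
        rw [inner_sub_left]; exact this
      have hbound : ∀ s ∈ Ico (0:ℝ) 1,
          ‖⟪gy b (y' + s • (y - y')) - gy a (y' + s • (y - y')), y - y'⟫‖
            ≤ Ly * (ε * ‖u‖) * ‖y - y'‖ := by
        intro s _
        calc ‖⟪gy b (y' + s • (y - y')) - gy a (y' + s • (y - y')), y - y'⟫‖
            ≤ ‖gy b (y' + s • (y - y')) - gy a (y' + s • (y - y'))‖ * ‖y - y'‖ := by
              rw [Real.norm_eq_abs]; exact abs_real_inner_le_norm _ _
          _ ≤ (Ly * (‖b - a‖ + ‖(y' + s • (y - y')) - (y' + s • (y - y'))‖)) * ‖y - y'‖ := by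
              apply mul_le_mul_of_nonneg_right (hLipy _ _ _ _) (norm_nonneg _)
          _ = Ly * (ε * ‖u‖) * ‖y - y'‖ := by rw [sub_self, norm_zero, add_zero, hba]
      have key := norm_image_sub_le_of_norm_deriv_le_segment_01'
        (f := ψ) (f' := fun s => ⟪gy b (y' + s • (y - y')) - gy a (y' + s • (y - y')), y - y'⟫)
        (fun s _ => (hder s).hasDerivWithinAt) hbound
      have hψ1 : ψ 1 = f b y - f a y := by simp [hψ]
      have hψ0 : ψ 0 = f b y' - f a y' := by simp [hψ]
      rw [hψ1, hψ0] at key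
      exact key
    -- Step 2: bound along x-direction
    have step2 : |Δ - ε * ‖u‖ ^ 2| ≤ 2 * Lx * ε * ‖u‖ ^ 2 * ε := by
      set h2 : ℝ → ℝ := fun t => f (a + t • u) y - f (a + t • u) y' - t * ‖u‖ ^ 2 with hh2
      have hder : ∀ t : ℝ, HasDerivAt h2
          (⟪gx (a + t • u) y - gx (a + t • u) y', u⟫ - ‖u‖ ^ 2) t := by
        intro t
        have h1 := my_line_deriv (hgradx (a + t • u) y)
        have h2' := my_line_deriv (hgradx (a + t • u) y')
        have h3 : HasDerivAt (fun t : ℝ => t * ‖u‖ ^ 2) (‖u‖ ^ 2) t := by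
          simpa using (hasDerivAt_id t).mul_const (‖u‖ ^ 2)
        have := (h1.sub h2').sub h3
        rw [inner_sub_left]; exact this
      have hbound : ∀ t ∈ Ico (0:ℝ) ε,
          ‖⟪gx (a + t • u) y - gx (a + t • u) y', u⟫ - ‖u‖ ^ 2‖ ≤ 2 * Lx * ε * ‖u‖ ^ 2 := by
        intro t ht
        have htnn : 0 ≤ t := ht.1
        have htε : t ≤ ε := le_of_lt ht.2
        have h4 : (⟪u, u⟫ : ℝ) = ⟪gx a y, u⟫ - ⟪gx a y', u⟫ := by
          nth_rewrite 1 [hu]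
          rw [inner_sub_left]
        have hrw : ⟪gx (a + t • u) y - gx (a + t • u) y', u⟫ - ‖u‖ ^ 2
            = ⟪(gx (a + t • u) y - gx a y) - (gx (a + t • u) y' - gx a y'), u⟫ := by
          rw [← real_inner_self_eq_norm_sq u, h4]
          simp only [inner_sub_left]
          ring
        rw [hrw]
        have hn1 : ‖gx (a + t • u) y - gx a y‖ ≤ Lx * (t * ‖u‖) := by
          have := hLipx (a + t • u) a y y
          simpa [norm_smul, abs_of_nonneg htnn] using this
        have hn2 : ‖gx (a + t • u) y' - gx a y'‖ ≤ Lx * (t * ‖u‖) := by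
          have := hLipx (a + t • u) a y' y'
          simpa [norm_smul, abs_of_nonneg htnn] using this
        calc ‖⟪(gx (a + t • u) y - gx a y) - (gx (a + t • u) y' - gx a y'), u⟫‖
            ≤ ‖(gx (a + t • u) y - gx a y) - (gx (a + t • u) y' - gx a y')‖ * ‖u‖ := by
              rw [Real.norm_eq_abs]; exact abs_real_inner_le_norm _ _
          _ ≤ (‖gx (a + t • u) y - gx a y‖ + ‖gx (a + t • u) y' - gx a y'‖) * ‖u‖ := by
              apply mul_le_mul_of_nonneg_right (norm_sub_le _ _) (norm_nonneg _)
          _ ≤ (Lx * (t * ‖u‖) + Lx * (t * ‖u‖)) * ‖u‖ := by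
              apply mul_le_mul_of_nonneg_right (add_le_add hn1 hn2) (norm_nonneg _)
          _ ≤ 2 * Lx * ε * ‖u‖ ^ 2 := by
              have h5 : Lx * t * ‖u‖ ^ 2 ≤ Lx * ε * ‖u‖ ^ 2 :=
                mul_le_mul_of_nonneg_right (mul_le_mul_of_nonneg_left htε hLx) (sq_nonneg _)
              nlinarith [h5]
      have key := norm_image_sub_le_of_norm_deriv_le_segment'
        (a := (0:ℝ)) (b := ε) (f := h2)
        (f' := fun t => ⟪gx (a + t • u) y - gx (a + t • u) y', u⟫ - ‖u‖ ^ 2)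
        (fun t _ => (hder t).hasDerivWithinAt) hbound ε (right_mem_Icc.mpr (le_of_lt hε))
      have hε0 : h2 ε - h2 0 = Δ - ε * ‖u‖ ^ 2 := by simp [hh2, hΔ]; ring
      rw [hε0] at key
      simpa using key
    -- combine
    have habs1 : Δ ≤ Ly * (ε * ‖u‖) * ‖y - y'‖ := (abs_le.mp step1).2
    have habs2' : ε * ‖u‖ ^ 2 - Δ ≤ 2 * Lx * ε * ‖u‖ ^ 2 * ε := by
      have := (abs_le.mp step2).1; linarith
    have hmain : ε * ‖u‖ ^ 2 ≤ Ly * (ε * ‖u‖) * ‖y - y'‖ + 2 * Lx * ε * ‖u‖ ^ 2 * ε := by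
      linarith
    refine le_of_mul_le_mul_left ?_ hε
    calc ε * ‖u‖ ^ 2 ≤ Ly * (ε * ‖u‖) * ‖y - y'‖ + 2 * Lx * ε * ‖u‖ ^ 2 * ε := hmain
      _ = ε * (Ly * ‖y - y'‖ * ‖u‖ + 2 * Lx * ‖u‖ ^ 2 * ε) := by ring
  -- from the claim, conclude
  have hsq : ‖u‖ ^ 2 ≤ Ly * ‖y - y'‖ * ‖u‖ := by
    apply le_of_forall_pos_le_add
    intro δ hδ
    have hεpos : 0 < δ / (2 * Lx * ‖u‖ ^ 2 + 1) := by positivity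
    have := claim _ hεpos
    have h2 : 2 * Lx * ‖u‖ ^ 2 * (δ / (2 * Lx * ‖u‖ ^ 2 + 1)) ≤ δ := by
      rw [← mul_div_assoc, div_le_iff₀ (by positivity : (0:ℝ) < 2 * Lx * ‖u‖ ^ 2 + 1)]
      nlinarith
    linarith
  exact le_of_mul_le_mul_right (by nlinarith [hsq] : ‖u‖ * ‖u‖ ≤ (Ly * ‖y - y'‖) * ‖u‖) hupos

/-- the dual function `d(y,z,v) = min_{x∈X} F(x,y,z,v)` is differentiable
in `y` with `∇_y d(y,z,v) = ∇_y F(x(y,z,v),y,z,v) = ∇_y f(x(y,z,v),y) − r₂ • (y−v)`,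
and this gradient is `L_d`-Lipschitz on `Y` with
`L_d = L_y σ₁ + L_y + r₂`, `σ₁ = (L_y + r₁ − L_x)/(r₁ − L_x)`. -/
theorem stmt_6
    {E D : Type*} [NormedAddCommGroup E] [InnerProductSpace ℝ E] [CompleteSpace E]
    [NormedAddCommGroup D] [InnerProductSpace ℝ D] [CompleteSpace D]
    (f : E → D → ℝ) (gx : E → D → E) (gy : E → D → D) (Lx Ly r₁ r₂ : ℝ)
    (hr₁ : r₁ > Lx) (hr₂ : r₂ > 0)
    (X : Set E) (Y : Set D)
    (hXc : IsCompact X) (hXconv : Convex ℝ X) (hXne : X.Nonempty)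
    (hYc : IsCompact Y) (hYconv : Convex ℝ Y) (hYne : Y.Nonempty)
    (hgradx : ∀ x y, HasGradientAt (fun x' => f x' y) (gx x y) x)
    (hgrady : ∀ x y, HasGradientAt (fun y' => f x y') (gy x y) y)
    (hLipx : ∀ x x' y y', ‖gx x y - gx x' y'‖ ≤ Lx * (‖x - x'‖ + ‖y - y'‖))
    (hLipy : ∀ x x' y y', ‖gy x y - gy x' y'‖ ≤ Ly * (‖x - x'‖ + ‖y - y'‖))
    (F : E → D → E → D → ℝ)
    (hF : ∀ x y z v, F x y z v
      = f x y + r₁ / 2 * ‖x - z‖ ^ 2 - r₂ / 2 * ‖y - v‖ ^ 2)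
    (xm : D → E → D → E)
    (hxm : ∀ y z v, xm y z v ∈ X ∧ IsMinOn (fun x => F x y z v) X (xm y z v))
    (d : D → E → D → ℝ)
    (hd : ∀ y z v, d y z v = F (xm y z v) y z v) :
    (∀ (y : D) (z : E) (v : D),
      HasGradientAt (fun y' => d y' z v) (gy (xm y z v) y - r₂ • (y - v)) y) ∧
    (∀ (z : E) (v : D), ∀ y ∈ Y, ∀ y' ∈ Y,
      ‖(gy (xm y z v) y - r₂ • (y - v)) - (gy (xm y' z v) y' - r₂ • (y' - v))‖ ≤
        (Ly * ((Ly + r₁ - Lx) / (r₁ - Lx)) + Ly + r₂) * ‖y - y'‖) := by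
  rcases subsingleton_or_nontrivial D with hD | hD
  · constructor
    · intro y z v
      have hg : gy (xm y z v) y - r₂ • (y - v) = 0 := Subsingleton.elim _ _
      rw [hg]
      have heq : (fun y' => d y' z v) = fun _ => d y z v :=
        funext fun y' => by rw [Subsingleton.elim y' y]
      rw [heq]
      exact hasGradientAt_const _ _
    · intro z v y hy y' hy'
      have h1 : y = y' := Subsingleton.elim _ _
      subst h1
      simp
  · -- nontrivial D
    obtain ⟨y0, hy0⟩ := exists_ne (0 : D)
    have hy0n : 0 < ‖y0‖ := norm_pos_iff.mpr hy0
    have hLy : 0 ≤ Ly := by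
      have h := hLipy 0 0 0 y0
      have h2 := norm_nonneg (gy 0 0 - gy 0 y0)
      simp only [sub_self, norm_zero, zero_add, zero_sub, norm_neg] at h
      nlinarith
    have hLx : 0 ≤ Lx := by
      have h := hLipx 0 0 0 y0
      have h2 := norm_nonneg (gx 0 0 - gx 0 y0)
      simp only [sub_self, norm_zero, zero_add, zero_sub, norm_neg] at h
      nlinarith
    have hr : 0 < r₁ - Lx := sub_pos.mpr hr₁
    -- gradient of F in x
    have hgradF_x : ∀ y z v w, HasGradientAt (fun x' => F x' y z v) (gx w y + r₁ • (w - z)) w := by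
      intro y z v w
      have h1 : HasGradientAt (fun x' => f x' y + r₁ / 2 * ‖x' - z‖ ^ 2)
          (gx w y + r₁ • (w - z)) w := my_grad_add (hgradx w y) (my_grad_quad r₁ z w)
      have h2 : (fun x' => F x' y z v)
          = fun x' => (f x' y + r₁ / 2 * ‖x' - z‖ ^ 2) + (-(r₂ / 2 * ‖y - v‖ ^ 2)) :=
        funext fun x' => by rw [hF]; ring
      rw [h2]
      simpa using my_grad_add h1 (hasGradientAt_const _ _)
    -- gradient of F in y
    have hgradF_y : ∀ x z v w, HasGradientAt (fun y' => F x y' z v) (gy x w - r₂ • (w - v)) w := by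
      intro x z v w
      have h1 : HasGradientAt (fun y' => f x y' + (-r₂) / 2 * ‖y' - v‖ ^ 2)
          (gy x w + (-r₂) • (w - v)) w := my_grad_add (hgrady x w) (my_grad_quad (-r₂) v w)
      have h2 : (fun y' => F x y' z v)
          = fun y' => (f x y' + (-r₂) / 2 * ‖y' - v‖ ^ 2) + (r₁ / 2 * ‖x - z‖ ^ 2) :=
        funext fun y' => by rw [hF]; ring
      rw [h2]
      have h3 := my_grad_add h1 (hasGradientAt_const w (r₁ / 2 * ‖x - z‖ ^ 2))
      have h4 : gy x w + (-r₂) • (w - v) + 0 = gy x w - r₂ • (w - v) := by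
        rw [add_zero, neg_smul, ← sub_eq_add_neg]
      rwa [h4] at h3
    -- cross bound
    have hcross : ∀ a y y', ‖gx a y - gx a y'‖ ≤ Ly * ‖y - y'‖ :=
      my_cross f gx gy Lx Ly hLx hLy hgradx hgrady hLipx hLipy
    -- Lipschitz continuity of the minimizer
    have hxmLip : ∀ z v y y',
        ‖xm y z v - xm y' z v‖ ≤ Ly / (r₁ - Lx) * ‖y - y'‖ := by
      intro z v y y'
      have ha := hxm y' z v
      have hb := hxm y z v
      set a := xm y' z v
      set b := xm y z v
      have opt1 : 0 ≤ ⟪gx a y' + r₁ • (a - z), b - a⟫ :=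
        my_var_ineq hXconv (hgradF_x y' z v) ha.1 hb.1 ha.2
      have opt2 : 0 ≤ ⟪gx b y + r₁ • (b - z), a - b⟫ :=
        my_var_ineq hXconv (hgradF_x y z v) hb.1 ha.1 hb.2
      have i2' : ⟪gx b y + r₁ • (b - z), b - a⟫ ≤ 0 := by
        rw [show b - a = -(a - b) by abel, inner_neg_right]
        linarith
      have idt : ⟪gx b y + r₁ • (b - z), b - a⟫ - ⟪gx a y + r₁ • (a - z), b - a⟫
          = ⟪gx b y - gx a y, b - a⟫ + r₁ * ‖b - a‖ ^ 2 := by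
        rw [← real_inner_self_eq_norm_sq (b - a)]
        simp only [inner_add_left, inner_sub_left, real_inner_smul_left]
        ring
      have id2 : ⟪gx a y + r₁ • (a - z), b - a⟫
          = ⟪gx a y' + r₁ • (a - z), b - a⟫ - ⟪gx a y' - gx a y, b - a⟫ := by
        simp only [inner_add_left, inner_sub_left]
        ring
      have i3 : |⟪gx b y - gx a y, b - a⟫| ≤ Lx * ‖b - a‖ * ‖b - a‖ := by
        calc |⟪gx b y - gx a y, b - a⟫| ≤ ‖gx b y - gx a y‖ * ‖b - a‖ :=
              abs_real_inner_le_norm _ _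
          _ ≤ Lx * ‖b - a‖ * ‖b - a‖ := by
              have := hLipx b a y y
              simp only [sub_self, norm_zero, add_zero] at this
              exact mul_le_mul_of_nonneg_right this (norm_nonneg _)
      have i4 : ⟪gx a y' - gx a y, b - a⟫ ≤ Ly * ‖y - y'‖ * ‖b - a‖ := by
        calc ⟪gx a y' - gx a y, b - a⟫ ≤ |⟪gx a y' - gx a y, b - a⟫| := le_abs_self _
          _ ≤ ‖gx a y' - gx a y‖ * ‖b - a‖ := abs_real_inner_le_norm _ _
          _ ≤ (Ly * ‖y' - y‖) * ‖b - a‖ :=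
              mul_le_mul_of_nonneg_right (hcross a y' y) (norm_nonneg _)
          _ = Ly * ‖y - y'‖ * ‖b - a‖ := by rw [norm_sub_rev]
      have key : (r₁ - Lx) * (‖b - a‖ * ‖b - a‖) ≤ Ly * ‖y - y'‖ * ‖b - a‖ := by
        have habs := abs_le.mp i3
        nlinarith [habs.1, habs.2, opt1, i2', idt, id2, i4]
      rcases eq_or_lt_of_le (norm_nonneg (b - a)) with h0 | hpos
      · rw [← h0]
        positivity
      · have h1 : ‖b - a‖ * (r₁ - Lx) ≤ Ly * ‖y - y'‖ := by
          have := le_of_mul_le_mul_right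
            (by nlinarith [key] : (‖b - a‖ * (r₁ - Lx)) * ‖b - a‖ ≤ (Ly * ‖y - y'‖) * ‖b - a‖)
            hpos
          exact this
        rw [div_mul_eq_mul_div, le_div_iff₀ hr]
        linarith
    -- descent lemma for F in y
    have hdesc : ∀ x z v y y', |F x y' z v - F x y z v - ⟪gy x y - r₂ • (y - v), y' - y⟫|
        ≤ (Ly + r₂) * ‖y' - y‖ ^ 2 := by
      intro x z v y y'
      apply my_descent (g := fun w => F x w z v) (G := fun w => gy x w - r₂ • (w - v))
        (hgradF_y x z v)
      intro w w'
      have hid : (gy x w - r₂ • (w - v)) - (gy x w' - r₂ • (w' - v))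
          = (gy x w - gy x w') - r₂ • (w - w') := by
        simp only [smul_sub]
        abel
      rw [hid]
      calc ‖(gy x w - gy x w') - r₂ • (w - w')‖
          ≤ ‖gy x w - gy x w'‖ + ‖r₂ • (w - w')‖ := norm_sub_le _ _
        _ ≤ Ly * (‖x - x‖ + ‖w - w'‖) + r₂ * ‖w - w'‖ := by
            apply add_le_add (hLipy x x w w')
            rw [norm_smul, Real.norm_eq_abs, abs_of_pos hr₂]
        _ = (Ly + r₂) * ‖w - w'‖ := by rw [sub_self, norm_zero, zero_add]; ring
    constructor
    · -- differentiability (Danskin)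
      intro y z v
      rw [hasGradientAt_iff_isLittleO]
      set a := xm y z v with hadef
      set g0 := gy a y - r₂ • (y - v) with hg0
      set K := Ly * (Ly / (r₁ - Lx)) + (Ly + r₂) with hK
      have hKnn : 0 ≤ K := by
        have h1 : 0 ≤ Ly / (r₁ - Lx) := div_nonneg hLy hr.le
        have h2 : 0 ≤ Ly * (Ly / (r₁ - Lx)) := mul_nonneg hLy h1
        rw [hK]
        nlinarith [hr₂.le]
      apply my_sq_bound_littleO hKnn
      intro t
      set b := xm t z v with hbdef
      have hmin_y := (hxm y z v).2
      have hmin_t := (hxm t z v).2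
      have hup : d t z v - d y z v - ⟪g0, t - y⟫ ≤ (Ly + r₂) * ‖t - y‖ ^ 2 := by
        have h1 : d t z v ≤ F a t z v := by
          rw [hd]
          exact isMinOn_iff.mp hmin_t a (hxm y z v).1
        have h2 := (abs_le.mp (hdesc a z v y t)).2
        have h3 : d y z v = F a y z v := hd y z v
        rw [hg0]
        linarith
      have hlo : -(K * ‖t - y‖ ^ 2) ≤ d t z v - d y z v - ⟪g0, t - y⟫ := by
        have h1 : d y z v ≤ F b y z v := by
          rw [hd]
          exact isMinOn_iff.mp hmin_y b (hxm t z v).1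
        have h2 := (abs_le.mp (hdesc b z v y t)).1
        have h3 : d t z v = F b t z v := hd t z v
        have h4 : ⟪gy b y - r₂ • (y - v), t - y⟫
            = ⟪g0, t - y⟫ + ⟪gy b y - gy a y, t - y⟫ := by
          rw [hg0]
          simp only [inner_sub_left]
          ring
        have h5 : ⟪gy b y - gy a y, t - y⟫ ≥ -(Ly * (Ly / (r₁ - Lx)) * ‖t - y‖ ^ 2) := by
          have hi : |⟪gy b y - gy a y, t - y⟫| ≤ ‖gy b y - gy a y‖ * ‖t - y‖ :=
            abs_real_inner_le_norm _ _
          have hn : ‖gy b y - gy a y‖ ≤ Ly * (Ly / (r₁ - Lx) * ‖t - y‖) := by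
            calc ‖gy b y - gy a y‖ ≤ Ly * (‖b - a‖ + ‖y - y‖) := hLipy b a y y
              _ = Ly * ‖b - a‖ := by rw [sub_self, norm_zero, add_zero]
              _ ≤ Ly * (Ly / (r₁ - Lx) * ‖t - y‖) :=
                  mul_le_mul_of_nonneg_left (hxmLip z v t y) hLy
          have habs := abs_le.mp hi
          have h6 : ‖gy b y - gy a y‖ * ‖t - y‖
              ≤ Ly * (Ly / (r₁ - Lx) * ‖t - y‖) * ‖t - y‖ :=
            mul_le_mul_of_nonneg_right hn (norm_nonneg _)
          nlinarith [habs.1]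
        rw [hK]
        linarith
      rw [abs_le]
      constructor
      · linarith
      · have : (Ly + r₂) * ‖t - y‖ ^ 2 ≤ K * ‖t - y‖ ^ 2 := by
          apply mul_le_mul_of_nonneg_right _ (sq_nonneg _)
          have h1 : 0 ≤ Ly * (Ly / (r₁ - Lx)) := mul_nonneg hLy (div_nonneg hLy hr.le)
          rw [hK]; linarith
        linarith
    · -- Lipschitz bound for the gradient
      intro z v y hy y' hy'
      set a := xm y z v
      set b := xm y' z v
      have hid : (gy a y - r₂ • (y - v)) - (gy b y' - r₂ • (y' - v))
          = (gy a y - gy b y') - r₂ • (y - y') := by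
        simp only [smul_sub]
        abel
      rw [hid]
      have hσ : Ly / (r₁ - Lx) ≤ (Ly + r₁ - Lx) / (r₁ - Lx) :=
        (div_le_div_iff_of_pos_right hr).mpr (by linarith)
      have h1 : ‖a - b‖ ≤ Ly / (r₁ - Lx) * ‖y - y'‖ := hxmLip z v y y'
      calc ‖(gy a y - gy b y') - r₂ • (y - y')‖
          ≤ ‖gy a y - gy b y'‖ + ‖r₂ • (y - y')‖ := norm_sub_le _ _
        _ ≤ Ly * (‖a - b‖ + ‖y - y'‖) + r₂ * ‖y - y'‖ := by
            apply add_le_add (hLipy a b y y')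
            rw [norm_smul, Real.norm_eq_abs, abs_of_pos hr₂]
        _ ≤ (Ly * ((Ly + r₁ - Lx) / (r₁ - Lx)) + Ly + r₂) * ‖y - y'‖ := by
            have h2 : Ly * ‖a - b‖ ≤ Ly * (Ly / (r₁ - Lx) * ‖y - y'‖) :=
              mul_le_mul_of_nonneg_left h1 hLy
            have h3 : Ly * (Ly / (r₁ - Lx)) * ‖y - y'‖
                ≤ Ly * ((Ly + r₁ - Lx) / (r₁ - Lx)) * ‖y - y'‖ :=
              mul_le_mul_of_nonneg_right
                (mul_le_mul_of_nonneg_left hσ hLy) (norm_nonneg _)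
            nlinarith [h2, h3]
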